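/- Let a, c, R, x, y ∈ ℝ and for α ∈ ℝ set d_K(x,y,α) = x·(2c + R cos α) + y·R sin α + 2a² − 2c² − R²/2 − 2cR cos α. Suppose d_K(x,y,α) = 0 and the derivative of the function α ↦ d_K(x,y,α) vanishes at α (i.e. −xR sin α + yR cos α + 2cR sin α = 0). Then x²(R² − 4c²) − 2cx(4a² − 4c² + R²) + 4c²R² − ¼(4a² − 4c² − R²)² + R²y² = 0. (Hence the envelope of the family of directrices of the Kepler flight ellipses is contained in a conic with one focus at F' = (2c,0): an ellipse or hyperbola when 2c ≠ R, and a parabola when 2c = R.) -/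

import Mathlib

/-- **Envelope of the family of directrices of the Kepler flight ellipses.**
For the family `d_K(x,y,α) = x(2c + R cos α) + yR sin α + 2a² − 2c² − R²/2 − 2cR cos α`,
if `d_K(x,y,α) = 0` and `∂d_K/∂α (x,y,α) = 0`, then
`x²(R² − 4c²) − 2cx(4a² − 4c² + R²) + 4c²R² − ¼(4a² − 4c² − R²)² + R²y² = 0`:
the envelope of the directrices is contained in a conic with one focus at `(2c, 0)`. -/
theorem kepler_directrix_envelope
    (a c R x y α : ℝ)
    (dK : ℝ → ℝ)
    (hdK : ∀ β, dK β = x * (2 * c + R * Real.cos β) + y * (R * Real.sin β)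
      + 2 * a ^ 2 - 2 * c ^ 2 - R ^ 2 / 2 - 2 * c * R * Real.cos β)
    (h0 : dK α = 0)
    (hd : deriv dK α = 0) :
    x ^ 2 * (R ^ 2 - 4 * c ^ 2) - 2 * c * x * (4 * a ^ 2 - 4 * c ^ 2 + R ^ 2)
      + 4 * c ^ 2 * R ^ 2 - (1 / 4) * (4 * a ^ 2 - 4 * c ^ 2 - R ^ 2) ^ 2
      + R ^ 2 * y ^ 2 = 0 := by
  have hfun : dK = fun β => x * (2 * c + R * Real.cos β) + y * (R * Real.sin β)
      + 2 * a ^ 2 - 2 * c ^ 2 - R ^ 2 / 2 - 2 * c * R * Real.cos β := funext hdK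
  have H : HasDerivAt (fun β => x * (2 * c + R * Real.cos β) + y * (R * Real.sin β)
      + 2 * a ^ 2 - 2 * c ^ 2 - R ^ 2 / 2 - 2 * c * R * Real.cos β)
      ((x * (R * (-Real.sin α)) + y * (R * Real.cos α)) - 2 * c * (R * (-Real.sin α))) α := by
    have hc : HasDerivAt Real.cos (-Real.sin α) α := Real.hasDerivAt_cos α
    have hs : HasDerivAt Real.sin (Real.cos α) α := Real.hasDerivAt_sin α
    simpa [mul_assoc, Pi.sub_def] using (((((hc.const_mul R).const_add (2 * c)).const_mul x).add
      ((hs.const_mul R).const_mul y)).add_const (2 * a ^ 2) |>.sub_const (2 * c ^ 2)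
      |>.sub_const (R ^ 2 / 2)).sub (((hc.const_mul R).const_mul (2 * c)))
  rw [hfun] at hd
  rw [H.deriv] at hd
  rw [hdK α] at h0
  have hpy : Real.sin α ^ 2 + Real.cos α ^ 2 = 1 := Real.sin_sq_add_cos_sq α
  linear_combination ((x - 2 * c) * R * Real.cos α + y * R * Real.sin α
      - (2 * c * x + 2 * a ^ 2 - 2 * c ^ 2 - R ^ 2 / 2)) * h0
    + (-(x - 2 * c) * R * Real.sin α + y * R * Real.cos α) * hd
    - (((x - 2 * c) * R) ^ 2 + (y * R) ^ 2) * hpy
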